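/- Let p be a prime number and write k = b·p^m with m ≥ 1, b ≥ 2 and p ∤ b. Then the integer (k²)!/(k!)^{k+1} is divisible by p^m. -/

import Mathlib

open Nat

/-- digit sum is invariant under multiplication by the base. -/
lemma sum_digits_mul_base {p : ℕ} (hp : 1 < p) (n : ℕ) :
    (p.digits (n * p)).sum = (p.digits n).sum := by
  rcases Nat.eq_zero_or_pos n with rfl | hn
  · simp
  · rw [Nat.digits_def' hp (by positivity)]
    simp [Nat.mul_mod_left, Nat.mul_div_cancel _ (by omega : 0 < p)]

lemma sum_digits_mul_base_pow {p : ℕ} (hp : 1 < p) (n m : ℕ) :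
    (p.digits (n * p ^ m)).sum = (p.digits n).sum := by
  induction m with
  | zero => simp
  | succ m ih =>
    rw [pow_succ, ← mul_assoc, sum_digits_mul_base hp, ih]

lemma sum_digits_pos {p : ℕ} (hp : 1 < p) {n : ℕ} (hn : 0 < n) :
    0 < (p.digits n).sum := by
  induction n using Nat.strong_induction_on with
  | _ n ih =>
    rw [Nat.digits_def' hp hn, List.sum_cons]
    rcases Nat.eq_zero_or_pos (n % p) with h | h
    · have hpn : p ≤ n := by
        by_contra h'
        push_neg at h'
        rw [Nat.mod_eq_of_lt h'] at h
        omega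
      have hdiv : 0 < n / p := Nat.div_pos hpn (by omega)
      have := ih (n / p) (Nat.div_lt_self hn hp) hdiv
      omega
    · omega

/-- subadditivity of the base-`p` digit sum, via Legendre's theorem. -/
lemma sum_digits_add_le (p : ℕ) [hp : Fact p.Prime] (x y : ℕ) :
    (p.digits (x + y)).sum ≤ (p.digits x).sum + (p.digits y).sum := by
  have hdvd : x ! * y ! ∣ (x + y)! := Nat.factorial_mul_factorial_dvd_factorial_add x y
  obtain ⟨c, hc⟩ := hdvd
  have hc0 : c ≠ 0 := by
    intro h
    rw [h, mul_zero] at hc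
    exact (Nat.factorial_ne_zero (x + y)) hc
  have hval : padicValNat p (x !) + padicValNat p (y !) ≤ padicValNat p ((x + y)!) := by
    rw [hc, padicValNat.mul (by positivity) hc0,
      padicValNat.mul (Nat.factorial_ne_zero x) (Nat.factorial_ne_zero y)]
    omega
  have h1 := sub_one_mul_padicValNat_factorial (p := p) (x + y)
  have h2 := sub_one_mul_padicValNat_factorial (p := p) x
  have h3 := sub_one_mul_padicValNat_factorial (p := p) y
  have hx := Nat.digit_sum_le p x
  have hy := Nat.digit_sum_le p y
  have hxy := Nat.digit_sum_le p (x + y)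
  have : (p - 1) * (padicValNat p (x !) + padicValNat p (y !)) ≤
      (p - 1) * padicValNat p ((x + y)!) := Nat.mul_le_mul_left _ hval
  rw [Nat.mul_add, h1, h2, h3] at this
  omega

lemma sum_digits_mul_le (p : ℕ) [hp : Fact p.Prime] (a b : ℕ) :
    (p.digits (a * b)).sum ≤ a * (p.digits b).sum := by
  induction a with
  | zero => simp
  | succ a ih =>
    calc (p.digits ((a + 1) * b)).sum = (p.digits (a * b + b)).sum := by ring_nf
      _ ≤ (p.digits (a * b)).sum + (p.digits b).sum := sum_digits_add_le p _ _
      _ ≤ a * (p.digits b).sum + (p.digits b).sum := by omega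
      _ = (a + 1) * (p.digits b).sum := by ring

lemma two_le_sum_digits {p b : ℕ} (hp : p.Prime) (hb : 2 ≤ b) (hpb : ¬ p ∣ b) :
    2 ≤ (p.digits b).sum := by
  have hp1 : 1 < p := hp.one_lt
  rcases Nat.lt_or_ge b p with h | h
  · rw [Nat.digits_def' hp1 (by omega)]
    rw [Nat.mod_eq_of_lt h, Nat.div_eq_of_lt h]
    simp
    omega
  · rw [Nat.digits_def' hp1 (by omega)]
    have h1 : 1 ≤ b % p := by
      have := Nat.mod_lt b (show 0 < p by omega)
      rcases Nat.eq_zero_or_pos (b % p) with h' | h'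
      · exact absurd (Nat.dvd_of_mod_eq_zero h') hpb
      · omega
    have h2 : 0 < (p.digits (b / p)).sum :=
      sum_digits_pos hp1 (Nat.div_pos h (by omega))
    simp only [List.sum_cons]
    omega

lemma bernoulli_nat {p : ℕ} (hp : 2 ≤ p) (m : ℕ) : (p - 1) * m + 1 ≤ p ^ m := by
  obtain ⟨q, rfl⟩ : ∃ q, p = q + 2 := ⟨p - 2, by omega⟩
  simp only [show q + 2 - 1 = q + 1 from rfl]
  induction m with
  | zero => simp
  | succ m ih =>
    have h1 : 1 ≤ (q + 2) ^ m := Nat.one_le_pow _ _ (by omega)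
    calc (q + 1) * (m + 1) + 1 = ((q + 1) * m + 1) + (q + 1) := by ring
      _ ≤ (q + 2) ^ m + (q + 1) := by omega
      _ ≤ (q + 2) ^ m * (q + 2) := by nlinarith
      _ = (q + 2) ^ (m + 1) := by rw [pow_succ]

/-- the key arithmetic inequality. -/
lemma key_ineq {p b m s sq : ℕ} (hp : 2 ≤ p) (hm : 1 ≤ m) (hb : 2 ≤ b)
    (hs : 2 ≤ s) (hsq : sq ≤ b * s) :
    (p - 1) * m + b * p ^ m + sq ≤ (b * p ^ m + 1) * s := by
  obtain ⟨q, rfl⟩ : ∃ q, p = q + 1 := ⟨p - 1, by omega⟩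
  have hq : 1 ≤ q := by omega
  have hpm : q * m + 1 ≤ (q + 1) ^ m := by
    have := bernoulli_nat hp m
    simpa using this
  simp only [Nat.add_sub_cancel]
  generalize hP : (q + 1) ^ m = P at hpm ⊢
  obtain ⟨t, rfl⟩ : ∃ t, s = t + 2 := ⟨s - 2, by omega⟩
  obtain ⟨u, rfl⟩ : ∃ u, P = q * m + 1 + u := ⟨P - (q * m + 1), by omega⟩
  obtain ⟨c, rfl⟩ : ∃ c, b = c + 2 := ⟨b - 2, by omega⟩
  have hA : 1 ≤ q * m := Nat.one_le_iff_ne_zero.mpr (by positivity)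
  generalize hG : q * m = A at *
  have key : (c + 2) * A ≤ (c + 2) * (t + 1) * (A + u) := by
    calc (c + 2) * A ≤ (c + 2) * (A + u) := by gcongr; omega
      _ ≤ (c + 2) * (A + u) * (t + 1) := Nat.le_mul_of_pos_right _ (by omega)
      _ = (c + 2) * (t + 1) * (A + u) := by ring
  nlinarith [hsq, hA, key]

/-- Let `p` be a prime and `k = b · p^m` with `m ≥ 1`, `b ≥ 2` and `p ∤ b`.  Then the
integer `(k²)! / (k!)^{k+1}` is divisible by `p^m`; equivalently,
`p^m · (k!)^{k+1}` divides `(k²)!`. -/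
theorem central_quotient_divisibility (p b m k : ℕ) (hp : p.Prime)
    (hm : 1 ≤ m) (hb : 2 ≤ b) (hpb : ¬ p ∣ b) (hk : k = b * p ^ m) :
    p ^ m * Nat.factorial k ^ (k + 1) ∣ Nat.factorial (k * k) := by
  haveI : Fact p.Prime := ⟨hp⟩
  have hp1 : 1 < p := hp.one_lt
  have hk0 : k ≠ 0 := by
    subst hk; positivity
  -- step 1: (k!)^(k+1) divides (k*k)! with quotient `uniformBell k k`
  have hbell := Nat.uniformBell_mul_eq k hk0
  set c := Nat.uniformBell k k with hcdef
  have hfac : (k * k)! = k ! ^ (k + 1) * c := by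
    rw [← hbell, pow_succ]
    ring
  have hc0 : c ≠ 0 := by
    intro h
    rw [h, mul_zero] at hfac
    exact Nat.factorial_ne_zero _ hfac
  -- step 2: valuation bookkeeping
  have hA : padicValNat p ((k * k)!) = (k + 1) * padicValNat p (k !) + padicValNat p c := by
    rw [hfac, padicValNat.mul (by positivity) hc0,
      padicValNat.pow (k !) (k + 1)]
  -- digit sums
  set S := (p.digits b).sum with hSdef
  have hSk : (p.digits k).sum = S := by
    rw [hk]; exact sum_digits_mul_base_pow hp1 b m
  have hSkk : (p.digits (k * k)).sum = (p.digits (b * b)).sum := by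
    have : k * k = (b * b) * p ^ (m + m) := by
      rw [hk]; ring
    rw [this, sum_digits_mul_base_pow hp1]
  have hS2 : 2 ≤ S := two_le_sum_digits hp hb hpb
  have hSbb : (p.digits (b * b)).sum ≤ b * S := sum_digits_mul_le p b b
  -- Legendre
  have hL1 := sub_one_mul_padicValNat_factorial (p := p) (k * k)
  have hL2 := sub_one_mul_padicValNat_factorial (p := p) k
  rw [hSkk] at hL1
  rw [hSk] at hL2
  -- key inequality : (p-1)*m + k + S(b*b) ≤ (k+1)*S
  have hkey : (p - 1) * m + k + (p.digits (b * b)).sum ≤ (k + 1) * S := by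
    have := key_ineq (p := p) (b := b) (m := m) (s := S)
      (sq := (p.digits (b * b)).sum) (by omega) hm hb hS2 hSbb
    calc (p - 1) * m + k + (p.digits (b * b)).sum
        = (p - 1) * m + b * p ^ m + (p.digits (b * b)).sum := by rw [hk]
      _ ≤ (b * p ^ m + 1) * S := this
      _ = (k + 1) * S := by rw [hk]
  -- deduce m ≤ padicValNat p c
  have hmc : m ≤ padicValNat p c := by
    have hmul : (p - 1) * (m + (k + 1) * padicValNat p (k !)) ≤
        (p - 1) * padicValNat p ((k * k)!) := by
      rw [hL1, Nat.mul_add]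
      have e2 : (p - 1) * ((k + 1) * padicValNat p (k !)) =
          (k + 1) * ((p - 1) * padicValNat p (k !)) := by ring
      rw [e2, hL2]
      have hSle : S ≤ k := by
        have h1 : S ≤ b := hSdef ▸ Nat.digit_sum_le p b
        have h2 : b ≤ k := by
          rw [hk]
          calc b = b * 1 := (mul_one b).symm
            _ ≤ b * p ^ m := Nat.mul_le_mul_left b (Nat.one_le_pow _ _ (by omega))
        omega
      have hSbble : (p.digits (b * b)).sum ≤ k * k := by
        have := Nat.digit_sum_le p (k * k)
        omega
      -- now a linear computation
      have hexp : (k + 1) * (k - S) + (k + 1) * S = k * k + k := by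
        rw [← Nat.mul_add]
        have : k - S + S = k := by omega
        rw [this]
        ring
      generalize hX : (k + 1) * (k - S) = X at hexp ⊢
      generalize hY : (k + 1) * S = Y at hexp hkey
      generalize hKK : k * k = KK at hexp hSbble ⊢
      generalize hPM : (p - 1) * m = PM at hkey ⊢
      omega
    have hcancel : m + (k + 1) * padicValNat p (k !) ≤ padicValNat p ((k * k)!) :=
      Nat.le_of_mul_le_mul_left hmul (by omega)
    omega
  -- conclude
  have hpc : p ^ m ∣ c := dvd_trans (pow_dvd_pow p hmc) pow_padicValNat_dvd
  obtain ⟨d, hd⟩ := hpc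
  exact ⟨d, by rw [hfac, hd]; ring⟩
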